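/- Let U(m,j) = C(m-j,j)·2^j and fix integers x, y ≥ 0 with x ≥ y + 2, m = x + 2y. Then for every r with 0 ≤ r ≤ ⌊y/2⌋, U(m, x-1-r) ≥ U(m, x+r). Consequently Σ_{j=0}^{x-1} U(m,j) ≥ Σ_{j≥x+1} U(m,j). -/

import Mathlib

def U (m j : ℕ) : ℕ := Nat.choose (m - j) j * 2 ^ j

lemma key' (x y : ℕ) (hx : y + 2 ≤ x) :
    ∀ r, Nat.choose (2 * y - r) (x + r) * 2 ^ (2 * r + 1)
      ≤ Nat.choose (2 * y + 1 + r) (x - 1 - r) := by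
  intro r
  induction r with
  | zero =>
    by_cases h : x ≤ 2 * y
    · obtain ⟨a, ha⟩ : ∃ a, 2 * y = x + a := ⟨2 * y - x, by omega⟩
      obtain ⟨s, hs⟩ : ∃ s, x = a + 4 + s := ⟨x - a - 4, by omega⟩
      have h1 := Nat.choose_mul_succ_eq (x + a) (x - 1)
      have h2 := Nat.choose_succ_right_eq (x + a) (x - 1)
      have e1 : x + a + 1 - (x - 1) = a + 2 := by omega
      have e2 : (x - 1) + 1 = x := by omega
      have e3 : x + a - (x - 1) = a + 1 := by omega
      rw [e1] at h1
      rw [e2, e3] at h2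
      -- h1 : C(x+a, x-1) * (x+a+1) = C(x+a+1, x-1) * (a+2)
      -- h2 : C(x+a, x) * x = C(x+a, x-1) * (a+1)
      have e4 : 2 * y - 0 = x + a := by omega
      have e5 : 2 * y + 1 + 0 = x + a + 1 := by omega
      have e6 : x - 1 - 0 = x - 1 := by omega
      rw [e4, e5, e6, Nat.add_zero]
      have hM : 0 < (a + 2) * (a + 1) := by positivity
      apply Nat.le_of_mul_le_mul_right _ hM
      have calc1 : Nat.choose (x + a + 1) (x - 1) * ((a + 2) * (a + 1))
          = Nat.choose (x + a) x * (x * (x + a + 1)) := by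
        calc Nat.choose (x + a + 1) (x - 1) * ((a + 2) * (a + 1))
            = (Nat.choose (x + a + 1) (x - 1) * (a + 2)) * (a + 1) := by ring
          _ = (Nat.choose (x + a) (x - 1) * (x + a + 1)) * (a + 1) := by rw [← h1]
          _ = (Nat.choose (x + a) (x - 1) * (a + 1)) * (x + a + 1) := by ring
          _ = (Nat.choose (x + a) x * x) * (x + a + 1) := by rw [← h2]
          _ = Nat.choose (x + a) x * (x * (x + a + 1)) := by ring
      rw [calc1]
      have hpoly : 2 ^ (2 * 0 + 1) * ((a + 2) * (a + 1)) ≤ x * (x + a + 1) := by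
        have : (a + 4 + s) * ((a + 4 + s) + a + 1)
            = 2 * ((a + 2) * (a + 1)) + (7 * a + 16 + 3 * a * s + 9 * s + s * s) := by ring
        subst hs; omega
      calc Nat.choose (x + a) x * 2 ^ (2 * 0 + 1) * ((a + 2) * (a + 1))
          = Nat.choose (x + a) x * (2 ^ (2 * 0 + 1) * ((a + 2) * (a + 1))) := by ring
        _ ≤ Nat.choose (x + a) x * (x * (x + a + 1)) :=
            Nat.mul_le_mul_left _ hpoly
    · rw [Nat.choose_eq_zero_of_lt (by omega), zero_mul]
      exact Nat.zero_le _
  | succ r ih =>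
    by_cases h : x + 2 * r + 2 ≤ 2 * y
    · obtain ⟨a, ha⟩ : ∃ a, 2 * y = x + 2 * r + 2 + a := ⟨2 * y - x - 2 * r - 2, by omega⟩
      obtain ⟨s, hs⟩ : ∃ s, x = 2 * r + 6 + a + s := ⟨x - 2 * r - 6 - a, by omega⟩
      -- rewrite ih
      have ei1 : 2 * y - r = x + r + 2 + a := by omega
      have ei2 : 2 * y + 1 + r = x + 3 * r + 3 + a := by omega
      have ei3 : x - 1 - r = (x - r - 2) + 1 := by omega
      rw [ei1, ei2, ei3] at ih
      set b := x - r - 2 with hb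
      have hbv : b = r + 4 + a + s := by omega
      -- ih : C(x+r+2+a, x+r) * 2^(2r+1) ≤ C(x+3r+3+a, b+1)
      have eg1 : 2 * y - (r + 1) = x + r + 1 + a := by omega
      have eg2 : 2 * y + 1 + (r + 1) = x + 3 * r + 4 + a := by omega
      have eg3 : x - 1 - (r + 1) = b := by omega
      rw [eg1, eg2, eg3]
      set n := x + r + 2 + a with hn
      set C := Nat.choose n (x + r) with hC
      set X := Nat.choose (x + r + 1 + a) (x + r + 1) with hX
      set D := Nat.choose (x + 3 * r + 3 + a) (b + 1) with hD
      set Y := Nat.choose (x + 3 * r + 4 + a) b with hY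
      -- Identity I1 : X * n * (x+r+1) = C * (a+2) * (a+1)
      have h1 := Nat.choose_succ_right_eq n (x + r)
      have e1 : n - (x + r) = a + 2 := by omega
      rw [e1] at h1
      -- h1 : C(n, x+r+1) * (x+r+1) = C * (a+2)
      have h2 := Nat.choose_mul_succ_eq (x + r + 1 + a) (x + r + 1)
      have e2 : x + r + 1 + a + 1 = n := by omega
      have e3 : n - (x + r + 1) = a + 1 := by omega
      rw [e2, e3] at h2
      -- h2 : X * n = C(n, x+r+1) * (a+1)
      have I1 : X * (n * (x + r + 1)) = C * ((a + 2) * (a + 1)) := by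
        calc X * (n * (x + r + 1)) = (X * n) * (x + r + 1) := by ring
          _ = (Nat.choose n (x + r + 1) * (a + 1)) * (x + r + 1) := by rw [h2]
          _ = (Nat.choose n (x + r + 1) * (x + r + 1)) * (a + 1) := by ring
          _ = (C * (a + 2)) * (a + 1) := by rw [h1]
          _ = C * ((a + 2) * (a + 1)) := by ring
      -- Identity I2 : Y * (a+4r+6) * (a+4r+5) = D * (x+3r+4+a) * (b+1)
      have h3 := Nat.choose_mul_succ_eq (x + 3 * r + 3 + a) b
      have e4 : x + 3 * r + 3 + a + 1 = x + 3 * r + 4 + a := by omega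
      have e5 : x + 3 * r + 4 + a - b = a + 4 * r + 6 := by omega
      rw [e4, e5] at h3
      -- h3 : C(x+3r+3+a, b) * (x+3r+4+a) = Y * (a+4r+6)
      have h4 := Nat.choose_succ_right_eq (x + 3 * r + 3 + a) b
      have e6 : x + 3 * r + 3 + a - b = a + 4 * r + 5 := by omega
      rw [e6] at h4
      -- h4 : D * (b+1) = C(x+3r+3+a, b) * (a+4r+5)
      have I2 : Y * ((a + 4 * r + 6) * (a + 4 * r + 5))
          = D * ((x + 3 * r + 4 + a) * (b + 1)) := by
        calc Y * ((a + 4 * r + 6) * (a + 4 * r + 5))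
            = (Y * (a + 4 * r + 6)) * (a + 4 * r + 5) := by ring
          _ = (Nat.choose (x + 3 * r + 3 + a) b * (x + 3 * r + 4 + a)) * (a + 4 * r + 5) := by
              rw [h3]
          _ = (Nat.choose (x + 3 * r + 3 + a) b * (a + 4 * r + 5)) * (x + 3 * r + 4 + a) := by
              ring
          _ = (D * (b + 1)) * (x + 3 * r + 4 + a) := by rw [h4]
          _ = D * ((x + 3 * r + 4 + a) * (b + 1)) := by ring
      -- polynomial inequality
      have hpoly : 4 * ((a + 2) * (a + 1)) * ((a + 4 * r + 6) * (a + 4 * r + 5))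
          ≤ (n * (x + r + 1)) * ((x + 3 * r + 4 + a) * (b + 1)) := by
        have key : ((2*r+6+a+s) + r + 2 + a) * ((2*r+6+a+s) + r + 1)
              * (((2*r+6+a+s) + 3 * r + 4 + a) * ((r+4+a+s) + 1))
            = 4 * ((a + 2) * (a + 1)) * ((a + 4 * r + 6) * (a + 4 * r + 5))
            + (2560 + 1590*s + 331*s^2 + 30*s^3 + s^4 + 3858*r + 1836*r*s + 260*r*s^2
              + 12*r*s^3 + 2177*r^2 + 690*r^2*s + 50*r^2*s^2 + 540*r^3 + 84*r^3*s + 45*r^4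
              + 1772*a + 948*a*s + 132*a*s^2 + 6*a*s^3 + 1920*a*r + 732*a*r*s + 52*a*r*s^2
              + 728*a*r^2 + 138*a*r^2*s + 108*a*r^3 + 392*a^2 + 186*a^2*s + 13*a^2*s^2
              + 222*a^2*r + 72*a^2*r*s + 27*a^2*r^2 + 28*a^3 + 12*a^3*s) := by ring
        have hxn : n * (x + r + 1) * ((x + 3 * r + 4 + a) * (b + 1))
            = ((2*r+6+a+s) + r + 2 + a) * ((2*r+6+a+s) + r + 1)
              * (((2*r+6+a+s) + 3 * r + 4 + a) * ((r+4+a+s) + 1)) := by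
          rw [hn, hbv, hs]
        omega
      -- assemble
      have hM : 0 < (n * (x + r + 1)) * ((a + 4 * r + 6) * (a + 4 * r + 5)) := by positivity
      apply Nat.le_of_mul_le_mul_right _ hM
      have pow_eq : (2 : ℕ) ^ (2 * (r + 1) + 1) = 2 ^ (2 * r + 1) * 4 := by
        rw [show 2 * (r + 1) + 1 = (2 * r + 1) + 2 by ring, pow_add]; norm_num
      calc X * 2 ^ (2 * (r + 1) + 1) * ((n * (x + r + 1)) * ((a + 4 * r + 6) * (a + 4 * r + 5)))
          = (X * (n * (x + r + 1))) * (2 ^ (2 * (r + 1) + 1)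
              * ((a + 4 * r + 6) * (a + 4 * r + 5))) := by ring
        _ = (C * ((a + 2) * (a + 1))) * (2 ^ (2 * r + 1) * 4
              * ((a + 4 * r + 6) * (a + 4 * r + 5))) := by rw [I1, pow_eq]
        _ = (C * 2 ^ (2 * r + 1)) * (4 * ((a + 2) * (a + 1))
              * ((a + 4 * r + 6) * (a + 4 * r + 5))) := by ring
        _ ≤ D * (4 * ((a + 2) * (a + 1)) * ((a + 4 * r + 6) * (a + 4 * r + 5))) :=
            Nat.mul_le_mul_right _ ih
        _ ≤ D * ((n * (x + r + 1)) * ((x + 3 * r + 4 + a) * (b + 1))) :=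
            Nat.mul_le_mul_left _ hpoly
        _ = (D * ((x + 3 * r + 4 + a) * (b + 1))) * (n * (x + r + 1)) := by ring
        _ = (Y * ((a + 4 * r + 6) * (a + 4 * r + 5))) * (n * (x + r + 1)) := by rw [I2]
        _ = Y * ((n * (x + r + 1)) * ((a + 4 * r + 6) * (a + 4 * r + 5))) := by ring
    · rw [Nat.choose_eq_zero_of_lt (by omega), zero_mul]
      exact Nat.zero_le _

lemma keyU (x y : ℕ) (hx : y + 2 ≤ x) (r : ℕ) :
    U (x + 2 * y) (x + r) ≤ U (x + 2 * y) (x - 1 - r) := by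
  unfold U
  by_cases hr : r + 1 ≤ x
  · have e1 : x + 2 * y - (x + r) = 2 * y - r := by omega
    have e2 : x + 2 * y - (x - 1 - r) = 2 * y + 1 + r := by omega
    rw [e1, e2]
    have e3 : (2 : ℕ) ^ (x + r) = 2 ^ (2 * r + 1) * 2 ^ (x - 1 - r) := by
      rw [← pow_add]; congr 1; omega
    rw [e3, ← mul_assoc]
    exact Nat.mul_le_mul_right _ (key' x y hx r)
  · rw [Nat.choose_eq_zero_of_lt (show x + 2 * y - (x + r) < x + r by omega)]
    simp

theorem stmt16 (x y : ℕ) (hx : y + 2 ≤ x) :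
    (∀ r, r ≤ y / 2 → U (x + 2 * y) (x + r) ≤ U (x + 2 * y) (x - 1 - r)) ∧
    (∑ j ∈ Finset.Icc (x + 1) (x + 2 * y), U (x + 2 * y) j)
      ≤ ∑ j ∈ Finset.range x, U (x + 2 * y) j := by
  constructor
  · exact fun r _ => keyU x y hx r
  · have step1 : (∑ j ∈ Finset.Icc (x + 1) (x + 2 * y), U (x + 2 * y) j)
        = ∑ j ∈ Finset.Icc (x + 1) (x + y), U (x + 2 * y) j := by
      refine (Finset.sum_subset (Finset.Icc_subset_Icc_right (by omega : x + y ≤ x + 2 * y)) ?_).symm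
      intro j hj hj'
      simp only [Finset.mem_Icc] at hj hj'
      unfold U
      rw [Nat.choose_eq_zero_of_lt (by omega), zero_mul]
    rw [step1]
    calc (∑ j ∈ Finset.Icc (x + 1) (x + y), U (x + 2 * y) j)
        ≤ ∑ j ∈ Finset.Icc (x + 1) (x + y), U (x + 2 * y) (2 * x - 1 - j) := by
          apply Finset.sum_le_sum
          intro j hj
          simp only [Finset.mem_Icc] at hj
          have := keyU x y hx (j - x)
          have e1 : x + (j - x) = j := by omega
          have e2 : x - 1 - (j - x) = 2 * x - 1 - j := by omega
          rwa [e1, e2] at this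
      _ = ∑ i ∈ (Finset.Icc (x + 1) (x + y)).image (fun j => 2 * x - 1 - j),
            U (x + 2 * y) i := by
          rw [Finset.sum_image]
          intro j1 h1 j2 h2 he
          simp only [Finset.mem_coe, Finset.mem_Icc] at h1 h2 he
          omega
      _ ≤ ∑ j ∈ Finset.range x, U (x + 2 * y) j := by
          apply Finset.sum_le_sum_of_subset
          intro i hi
          simp only [Finset.mem_image, Finset.mem_Icc] at hi
          obtain ⟨j, hj, rfl⟩ := hi
          simp only [Finset.mem_range]
          omega
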